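/- Let X be a uniformly random bit and A a random variable taking values in a finite set S_A. Then 2·I(X:A) ≤ Σ_{a∈S_A} (Pr[A=a|X=0] - Pr[A=a|X=1])² / (Pr[A=a|X=0] + Pr[A=a|X=1]) ≤ 12·I(X:A). -/

import Mathlib

open Finset

/-- Mutual information between a uniformly random bit `X` and a random variable `A`
whose conditional distributions given `X = 0` and `X = 1` are `p0` and `p1`.
Here `Pr[A = a, X = x] = (1/2) * pₓ a`, `Pr[A = a] = (1/2) * (p0 a + p1 a)`,
`Pr[X = x] = 1/2`, so each term is `(1/2) pₓ a * log (2 pₓ a / (p0 a + p1 a))`.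
Lean's conventions `log 0 = 0` and `y / 0 = 0` implement `0 · log 0 = 0`. -/
noncomputable def mutualInfoBit {α : Type*} [Fintype α] (p0 p1 : α → ℝ) : ℝ :=
  ∑ a, ((1 / 2) * p0 a * Real.log (2 * p0 a / (p0 a + p1 a)) +
        (1 / 2) * p1 a * Real.log (2 * p1 a / (p0 a + p1 a)))

noncomputable def Gfun (u : ℝ) : ℝ := Real.log u - Real.log (1-u) - (4*u - 2)

noncomputable def Ffun (u : ℝ) : ℝ :=
  u * Real.log u + (1-u) * Real.log (1-u) + Real.log 2 - (2*u-1)^2/2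

lemma hasDerivAt_Gfun {u : ℝ} (h0 : 0 < u) (h1 : u < 1) :
    HasDerivAt Gfun (1/u + 1/(1-u) - 4) u := by
  have hu : u ≠ 0 := h0.ne'
  have hv : (1:ℝ) - u ≠ 0 := (sub_pos.2 h1).ne'
  have d1 : HasDerivAt (fun x : ℝ => Real.log x) (1/u) u := by
    simpa [one_div] using Real.hasDerivAt_log hu
  have d2 : HasDerivAt (fun x : ℝ => Real.log (1-x)) ((1/(1-u)) * (-1)) u := by
    have hs : HasDerivAt (fun x : ℝ => (1:ℝ) - x) (-1) u := by
      simpa using (hasDerivAt_id u).const_sub 1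
    have hl : HasDerivAt (fun x : ℝ => Real.log x) (1/(1-u)) (1-u) := by
      simpa [one_div] using Real.hasDerivAt_log hv
    exact hl.comp u hs
  have d3 : HasDerivAt (fun x : ℝ => 4*x - 2) 4 u := by
    simpa using ((hasDerivAt_id u).const_mul 4).sub_const 2
  have := (d1.sub d2).sub d3
  refine this.congr_deriv ?_
  ring

lemma hasDerivAt_Ffun {u : ℝ} (h0 : 0 < u) (h1 : u < 1) :
    HasDerivAt Ffun (Gfun u) u := by
  have hu : u ≠ 0 := h0.ne'
  have hv : (1:ℝ) - u ≠ 0 := (sub_pos.2 h1).ne'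
  have d1 : HasDerivAt (fun x : ℝ => x * Real.log x) (Real.log u + 1) u :=
    Real.hasDerivAt_mul_log hu
  have d2 : HasDerivAt (fun x : ℝ => (1-x) * Real.log (1-x))
      ((Real.log (1-u) + 1) * (-1)) u := by
    have h : HasDerivAt (fun x : ℝ => (1:ℝ) - x) (-1) u := by
      simpa using (hasDerivAt_id u).const_sub 1
    exact (Real.hasDerivAt_mul_log hv).comp u h
  have d3 : HasDerivAt (fun x : ℝ => (2*x-1)^2/2) (2*(2*u-1)) u := by
    have h : HasDerivAt (fun x : ℝ => 2*x - 1) 2 u := by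
      simpa using ((hasDerivAt_id u).const_mul 2).sub_const 1
    have := (h.pow 2).div_const 2
    refine this.congr_deriv ?_
    ring
  have := ((d1.add d2).add_const (Real.log 2)).sub d3
  refine this.congr_deriv ?_
  simp [Gfun]; ring

lemma Gfun_monotone : MonotoneOn Gfun (Set.Ioo (0:ℝ) 1) := by
  have hint : interior (Set.Ioo (0:ℝ) 1) = Set.Ioo 0 1 := interior_Ioo
  apply monotoneOn_of_deriv_nonneg (convex_Ioo 0 1)
  · exact fun x hx => (hasDerivAt_Gfun hx.1 hx.2).differentiableAt.continuousAt.continuousWithinAt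
  · rw [hint]
    exact fun x hx => (hasDerivAt_Gfun hx.1 hx.2).differentiableAt.differentiableWithinAt
  · rw [hint]
    intro x hx
    rw [(hasDerivAt_Gfun hx.1 hx.2).deriv]
    have hx0 : (0:ℝ) < x := hx.1
    have hx1 : (0:ℝ) < 1 - x := sub_pos.2 hx.2
    have e : 1/x + 1/(1-x) - 4 = (2*x-1)^2/(x*(1-x)) := by
      field_simp
      ring
    rw [e]
    positivity

lemma Gfun_half : Gfun (1/2) = 0 := by norm_num [Gfun]

lemma Ffun_half : Ffun (1/2) = 0 := by
  have : Real.log (1/2) = -Real.log 2 := by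
    rw [one_div, Real.log_inv]
  norm_num [Ffun, this]
  ring

lemma Ffun_continuous : Continuous Ffun := by
  have h1 : Continuous fun x : ℝ => x * Real.log x := Real.continuous_mul_log
  have h2 : Continuous fun x : ℝ => (1-x) * Real.log (1-x) :=
    h1.comp (continuous_const.sub continuous_id)
  exact ((h1.add h2).add continuous_const).sub (by continuity)

lemma Ffun_nonneg {u : ℝ} (h0 : 0 ≤ u) (h1 : u ≤ 1) : 0 ≤ Ffun u := by
  rcases le_total u (1/2) with hu | hu
  · have anti : AntitoneOn Ffun (Set.Icc 0 (1/2)) := by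
      apply antitoneOn_of_deriv_nonpos (convex_Icc 0 (1/2)) (Ffun_continuous.continuousOn)
      · rw [interior_Icc]
        exact fun x hx => (hasDerivAt_Ffun hx.1 (by linarith [hx.2])).differentiableAt.differentiableWithinAt
      · rw [interior_Icc]
        intro x hx
        rw [(hasDerivAt_Ffun hx.1 (by linarith [hx.2])).deriv]
        have := Gfun_monotone ⟨hx.1, by linarith [hx.2]⟩ (by norm_num) hx.2.le
        rw [Gfun_half] at this
        exact this
    have := anti ⟨h0, hu⟩ (by norm_num) hu
    rw [Ffun_half] at this
    exact this
  · have mono : MonotoneOn Ffun (Set.Icc (1/2) 1) := by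
      apply monotoneOn_of_deriv_nonneg (convex_Icc (1/2) 1) (Ffun_continuous.continuousOn)
      · rw [interior_Icc]
        exact fun x hx => (hasDerivAt_Ffun (by linarith [hx.1]) hx.2).differentiableAt.differentiableWithinAt
      · rw [interior_Icc]
        intro x hx
        rw [(hasDerivAt_Ffun (by linarith [hx.1]) hx.2).deriv]
        have := Gfun_monotone (by norm_num) ⟨by linarith [hx.1], hx.2⟩ hx.1.le
        rw [Gfun_half] at this
        exact this
    have := mono (by norm_num) ⟨hu, h1⟩ hu
    rw [Ffun_half] at this
    exact this

lemma scalar_lower {u : ℝ} (h0 : 0 ≤ u) (h1 : u ≤ 1) :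
    (2*u-1)^2/2 ≤ u * Real.log (2*u) + (1-u) * Real.log (2*(1-u)) := by
  have e1 : u * Real.log (2*u) = u * Real.log u + u * Real.log 2 := by
    rcases eq_or_lt_of_le h0 with h | h
    · simp [← h]
    · rw [Real.log_mul two_ne_zero h.ne']; ring
  have e2 : (1-u) * Real.log (2*(1-u)) = (1-u) * Real.log (1-u) + (1-u) * Real.log 2 := by
    rcases eq_or_lt_of_le h1 with h | h
    · simp [h]
    · rw [Real.log_mul two_ne_zero (sub_pos.2 h).ne']; ring
  have := Ffun_nonneg h0 h1
  rw [Ffun] at this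
  rw [e1, e2]
  nlinarith [this]

lemma pair_lower (p q : ℝ) (hp : 0 ≤ p) (hq : 0 ≤ q) :
    (p-q)^2/(2*(p+q)) ≤ p * Real.log (2*p/(p+q)) + q * Real.log (2*q/(p+q)) := by
  rcases eq_or_lt_of_le (add_nonneg hp hq) with hs | hs
  · have hp0 : p = 0 := by linarith
    have hq0 : q = 0 := by linarith
    simp [hp0, hq0]
  · have hsne : p + q ≠ 0 := hs.ne'
    have hu0 : 0 ≤ p/(p+q) := div_nonneg hp hs.le
    have hu1 : p/(p+q) ≤ 1 := by
      rw [div_le_one hs]; linarith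
    have key := scalar_lower hu0 hu1
    have e : (1:ℝ) - p/(p+q) = q/(p+q) := by field_simp; ring
    have ha : 2*(p/(p+q)) = 2*p/(p+q) := by ring
    have hb : 2*(q/(p+q)) = 2*q/(p+q) := by ring
    rw [e, ha, hb] at key
    have hmul := mul_le_mul_of_nonneg_left key hs.le
    calc (p-q)^2/(2*(p+q)) = (p+q) * ((2*(p/(p+q))-1)^2/2) := by
          field_simp; ring
      _ ≤ (p+q) * (p/(p+q) * Real.log (2*p/(p+q)) + q/(p+q) * Real.log (2*q/(p+q))) := by
          rw [ha]; exact hmul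
      _ = p * Real.log (2*p/(p+q)) + q * Real.log (2*q/(p+q)) := by
          field_simp

lemma pair_upper (p q : ℝ) (hp : 0 ≤ p) (hq : 0 ≤ q) :
    p * Real.log (2*p/(p+q)) + q * Real.log (2*q/(p+q)) ≤ (p-q)^2/(p+q) := by
  rcases eq_or_lt_of_le (add_nonneg hp hq) with hs | hs
  · have hp0 : p = 0 := by linarith
    have hq0 : q = 0 := by linarith
    simp [hp0, hq0]
  · have hsne : p + q ≠ 0 := hs.ne'
    have t1 : p * Real.log (2*p/(p+q)) ≤ p * (2*p/(p+q) - 1) := by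
      rcases eq_or_lt_of_le hp with h | h
      · simp [← h]
      · exact mul_le_mul_of_nonneg_left
          (Real.log_le_sub_one_of_pos (by positivity)) hp
    have t2 : q * Real.log (2*q/(p+q)) ≤ q * (2*q/(p+q) - 1) := by
      rcases eq_or_lt_of_le hq with h | h
      · simp [← h]
      · exact mul_le_mul_of_nonneg_left
          (Real.log_le_sub_one_of_pos (by positivity)) hq
    have e : p * (2*p/(p+q) - 1) + q * (2*q/(p+q) - 1) = (p-q)^2/(p+q) := by
      field_simp; ring
    linarith

theorem mutualInfo_chiSq_bounds {α : Type*} [Fintype α] (p0 p1 : α → ℝ)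
    (h0 : ∀ a, 0 ≤ p0 a) (h1 : ∀ a, 0 ≤ p1 a)
    (hs0 : ∑ a, p0 a = 1) (hs1 : ∑ a, p1 a = 1) :
    2 * mutualInfoBit p0 p1 ≤ ∑ a, (p0 a - p1 a) ^ 2 / (p0 a + p1 a) ∧
      ∑ a, (p0 a - p1 a) ^ 2 / (p0 a + p1 a) ≤ 12 * mutualInfoBit p0 p1 := by
  have hup : ∀ a : α, p0 a * Real.log (2*p0 a/(p0 a+p1 a)) + p1 a * Real.log (2*p1 a/(p0 a+p1 a))
      ≤ (p0 a - p1 a)^2/(p0 a+p1 a) := fun a => pair_upper _ _ (h0 a) (h1 a)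
  have hlo : ∀ a : α, (p0 a - p1 a)^2/(2*(p0 a+p1 a))
      ≤ p0 a * Real.log (2*p0 a/(p0 a+p1 a)) + p1 a * Real.log (2*p1 a/(p0 a+p1 a)) :=
    fun a => pair_lower _ _ (h0 a) (h1 a)
  have hdiv : ∀ a : α, (p0 a - p1 a)^2/(2*(p0 a+p1 a)) = (p0 a - p1 a)^2/(p0 a+p1 a)/2 := by
    intro a; rw [div_div]; ring_nf
  have hXnn : ∀ a : α, 0 ≤ (p0 a - p1 a)^2/(p0 a+p1 a) := fun a =>
    div_nonneg (sq_nonneg _) (add_nonneg (h0 a) (h1 a))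
  have hI : 2 * mutualInfoBit p0 p1 = ∑ a, (p0 a * Real.log (2*p0 a/(p0 a+p1 a)) +
      p1 a * Real.log (2*p1 a/(p0 a+p1 a))) := by
    rw [mutualInfoBit, Finset.mul_sum]
    exact Finset.sum_congr rfl fun a _ => by ring
  constructor
  · rw [hI]
    exact Finset.sum_le_sum fun a _ => hup a
  · have h4 : ∑ a, (p0 a - p1 a) ^ 2 / (p0 a + p1 a) ≤ 4 * mutualInfoBit p0 p1 := by
      have : 4 * mutualInfoBit p0 p1 = ∑ a, 2 * (p0 a * Real.log (2*p0 a/(p0 a+p1 a)) +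
          p1 a * Real.log (2*p1 a/(p0 a+p1 a))) := by
        rw [mutualInfoBit, Finset.mul_sum]
        exact Finset.sum_congr rfl fun a _ => by ring
      rw [this]
      refine Finset.sum_le_sum fun a _ => ?_
      have := hlo a
      rw [hdiv a] at this
      linarith
    have hInn : 0 ≤ mutualInfoBit p0 p1 := by
      have := Finset.sum_le_sum (fun a (_ : a ∈ Finset.univ) => (hdiv a ▸ hlo a : (p0 a - p1 a)^2/(p0 a+p1 a)/2 ≤ _))
      have hs : 0 ≤ ∑ a, (p0 a - p1 a)^2/(p0 a+p1 a)/2 :=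
        Finset.sum_nonneg fun a _ => by linarith [hXnn a]
      linarith [hI ▸ le_trans hs this]
    linarith
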